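/- Let g : [1,∞) → (0,∞) be almost increasing. Then sup_{x,y∈(0,1)} [g(1/(1−y))/g(1/(1−x))]·[(1−y²)(1−x²)/(1−xy)²] ≍ sup_{t,x∈(0,1]} [t·g(1/(tx))]/g(1/x), with implicit constants depending only on g. Moreover, if x ↦ x·g(1/x) is almost increasing on (0,1], then these quantities are finite. -/

import Mathlib

open MeasureTheory Filter Set

noncomputable section

/-- The open unit disk in `ℂ`. -/
def unitD : Set ℂ := {z : ℂ | ‖z‖ < 1}

/-- Analytic (holomorphic) on the open unit disk. -/
def AnalyticOnD (f : ℂ → ℂ) : Prop := DifferentiableOn ℂ f unitD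

/-- The `p`-th power integral mean of `f` over the circle of radius `r`
(with respect to normalized Lebesgue measure). -/
def circMean (p : ℝ) (f : ℂ → ℂ) (r : ℝ) : ℝ :=
  (∫ θ in (0:ℝ)..(2 * Real.pi), ‖f ((r : ℂ) * Complex.exp ((θ : ℂ) * Complex.I))‖ ^ p) /
    (2 * Real.pi)

/-- The Hardy space `H^p` norm. -/
def Hnorm (p : ℝ) (f : ℂ → ℂ) : ℝ :=
  (sSup ((circMean p f) '' (Ico (0:ℝ) 1))) ^ (1 / p)

/-- Membership in the Hardy space `H^p`. -/
def memHp (p : ℝ) (f : ℂ → ℂ) : Prop :=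
  AnalyticOnD f ∧ BddAbove ((circMean p f) '' (Ico (0:ℝ) 1))

/-- The Möbius transform `σ_a(z) = (a - z)/(1 - conj a * z)`. -/
def sigmaM (a z : ℂ) : ℂ := (a - z) / (1 - (starRingEnd ℂ) a * z)

/-- `γ(f, a, p) = ‖f ∘ σ_a - f a‖_{H^p}`. -/
def gammaF (f : ℂ → ℂ) (a : ℂ) (p : ℝ) : ℝ :=
  Hnorm p (fun z => f (sigmaM a z) - f a)

/-- The seminorm `‖f‖_{*,v,p} = sup_{a ∈ D} v a * γ(f,a,p)`. -/
def starNorm (v : ℂ → ℝ) (p : ℝ) (f : ℂ → ℂ) : ℝ :=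
  sSup {r : ℝ | ∃ a ∈ unitD, r = v a * gammaF f a p}

/-- Membership in `BMOA_{v,p}`. -/
def memBMOA (v : ℂ → ℝ) (p : ℝ) (f : ℂ → ℂ) : Prop :=
  memHp p f ∧ BddAbove {r : ℝ | ∃ a ∈ unitD, r = v a * gammaF f a p}

/-- The norm of `BMOA_{v,p}`:  `|f 0| + ‖f‖_{*,v,p}`. -/
def BMOAnorm (v : ℂ → ℝ) (p : ℝ) (f : ℂ → ℂ) : ℝ :=
  ‖f 0‖ + starNorm v p f

/-- Membership in `VMOA_{v,p}`:  `v a * γ(f,a,p) → 0` as `|a| → 1`. -/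
def memVMOA (v : ℂ → ℝ) (p : ℝ) (f : ℂ → ℂ) : Prop :=
  memBMOA v p f ∧
    ∀ ε > (0:ℝ), ∃ r ∈ Ico (0:ℝ) 1, ∀ a ∈ unitD, r < ‖a‖ → v a * gammaF f a p < ε

/-- A weight: a positive function, integrable on the unit disk. -/
def IsWeight (v : ℂ → ℝ) : Prop :=
  (∀ z ∈ unitD, 0 < v z) ∧ IntegrableOn v unitD

/-- `F` is almost increasing on the set `s`. -/
def AlmostIncreasingOn (F : ℝ → ℝ) (s : Set ℝ) : Prop :=
  ∃ C : ℝ, 1 ≤ C ∧ ∀ x ∈ s, ∀ y ∈ s, y ≤ x → F y ≤ C * F x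

/-- The value of `g` at a real point, as a real number. -/
def gre (g : ℂ → ℂ) (x : ℝ) : ℝ := (g (x : ℂ)).re

/-- `v` is an admissible weight, witnessed by `g`. -/
structure Admissible (v : ℂ → ℝ) (g : ℂ → ℂ) : Prop where
  weight : IsWeight v
  g_analytic : DifferentiableOn ℂ g {z : ℂ | (1:ℝ)/2 ≤ z.re}
  g_real : ∀ x : ℝ, (1:ℝ)/2 ≤ x → (g (x : ℂ)).im = 0
  g_pos : ∀ x : ℝ, (1:ℝ)/2 ≤ x → 0 < gre g x
  g_almostInc : AlmostIncreasingOn (gre g) (Ici ((1:ℝ)/2))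
  v_equiv : ∃ c₁ > (0:ℝ), ∃ c₂ > (0:ℝ), ∀ z ∈ unitD,
      c₁ * gre g (1 / (1 - ‖z‖)) ≤ v z ∧ v z ≤ c₂ * gre g (1 / (1 - ‖z‖))
  A1 : ∃ ε₀ > (0:ℝ), ∃ M : ℝ, ∀ x : ℝ, 0 < x → x < 1 → x * gre g (1 / x) ^ (2 + ε₀) ≤ M
  A2 : ∃ C > (0:ℝ), ∀ a b : ℝ, 0 < b → b ≤ a → a < 2 →
      gre g (1 / b) ≤ C * gre g (a / b) * gre g (1 / a)
  A3 : ∃ c > (0:ℝ), ∀ z : ℂ, (1:ℝ)/2 ≤ z.re → c * gre g ‖z‖ ≤ ‖g z‖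

/-- `h(x) = ∫₀ˣ dt / ((1−t) g(1/(1−t)))` (real version). -/
def hFun (g : ℂ → ℂ) (x : ℝ) : ℝ :=
  ∫ t in (0:ℝ)..x, 1 / ((1 - t) * gre g (1 / (1 - t)))

/-- `∫₀ˣ dt / ((1−t) v(t))`. -/
def hFunV (v : ℂ → ℝ) (x : ℝ) : ℝ :=
  ∫ t in (0:ℝ)..x, 1 / ((1 - t) * v ((t : ℝ) : ℂ))

/-- The complex version of `h`, integrated along the segment `[0, w]`. -/
def hC (g : ℂ → ℂ) (w : ℂ) : ℂ :=
  ∫ s in (0:ℝ)..1, w / ((1 - (s : ℂ) * w) * g (1 / (1 - (s : ℂ) * w)))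

/-- The weighted composition operator `W_{ψ,φ} f = ψ · (f ∘ φ)`. -/
def Wop (ψ φ : ℂ → ℂ) (f : ℂ → ℂ) : ℂ → ℂ := fun z => ψ z * f (φ z)

/-- The composition operator `C_φ f = f ∘ φ`. -/
def Cop (φ : ℂ → ℂ) (f : ℂ → ℂ) : ℂ → ℂ := fun z => f (φ z)

/-- `T` is a bounded operator on the space described by membership `mem` and norm `N`. -/
def BoundedOpOn (mem : (ℂ → ℂ) → Prop) (N : (ℂ → ℂ) → ℝ) (T : (ℂ → ℂ) → ℂ → ℂ) : Prop :=
  (∀ f, mem f → mem (T f)) ∧ ∃ C : ℝ, 0 ≤ C ∧ ∀ f, mem f → N (T f) ≤ C * N f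

/-- The operator norm of `T` on `(mem, N)`. -/
def opNormOn (mem : (ℂ → ℂ) → Prop) (N : (ℂ → ℂ) → ℝ) (T : (ℂ → ℂ) → ℂ → ℂ) : ℝ :=
  sInf {C : ℝ | 0 ≤ C ∧ ∀ f, mem f → N (T f) ≤ C * N f}

/-- `T` is a compact operator on `(mem, N)`: it is bounded and the image of every bounded
sequence of the space has a subsequence converging in the norm `N`. -/
def CompactOpOn (mem : (ℂ → ℂ) → Prop) (N : (ℂ → ℂ) → ℝ) (T : (ℂ → ℂ) → ℂ → ℂ) : Prop :=
  BoundedOpOn mem N T ∧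
    ∀ f : ℕ → ℂ → ℂ, (∀ n, mem (f n)) → (∃ M : ℝ, ∀ n, N (f n) ≤ M) →
      ∃ h : ℂ → ℂ, ∃ k : ℕ → ℕ, StrictMono k ∧
        Tendsto (fun n => N (fun z => T (f (k n)) z - h z)) atTop (nhds 0)

/-- The essential norm of `T` on `(mem, N)`. -/
def essNormOn (mem : (ℂ → ℂ) → Prop) (N : (ℂ → ℂ) → ℝ) (T : (ℂ → ℂ) → ℂ → ℂ) : ℝ :=
  sInf {r : ℝ | ∃ K, CompactOpOn mem N K ∧ r = opNormOn mem N (fun f z => T f z - K f z)}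

/-- `φ_a := σ_{φ a} ∘ φ ∘ σ_a`. -/
def phiA (φ : ℂ → ℂ) (a : ℂ) : ℂ → ℂ := fun z => sigmaM (φ a) (φ (sigmaM a z))

/-- `α(ψ, φ, a)`. -/
def alphaF (v : ℂ → ℝ) (ψ φ : ℂ → ℂ) (a : ℂ) : ℝ :=
  v a / v (φ a) * ‖ψ a‖ * Hnorm 2 (phiA φ a)

/-- The dual norm of the evaluation functional at `z`, on the space `(mem, N)`. -/
def evalDualNormOn (mem : (ℂ → ℂ) → Prop) (N : (ℂ → ℂ) → ℝ) (z : ℂ) : ℝ :=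
  sSup {r : ℝ | ∃ f, mem f ∧ N f ≤ 1 ∧ r = ‖f z‖}

/-- `‖δ_z‖_{(BMOA_v)^*}`. -/
def evalDualNorm (v : ℂ → ℝ) (z : ℂ) : ℝ :=
  evalDualNormOn (memBMOA v 2) (BMOAnorm v 2) z

/-- `β(ψ, φ, a)`. -/
def betaF (v : ℂ → ℝ) (ψ φ : ℂ → ℂ) (a : ℂ) : ℝ :=
  evalDualNorm v (φ a) * (v a * gammaF ψ a 1)

/-- Picks `BMOA_v` (`b = true`) or `VMOA_v` (`b = false`). -/
def spaceMem (b : Bool) (v : ℂ → ℝ) : (ℂ → ℂ) → Prop :=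
  fun f => if b then memBMOA v 2 f else memVMOA v 2 f

/-- `limsup_{s(a) → 1, a ∈ D} F(a)`, defined as an infimum of eventual upper bounds. -/
def limsupBdry (s : ℂ → ℝ) (F : ℂ → ℝ) : ℝ :=
  sInf {c : ℝ | ∃ r : ℝ, r < 1 ∧ ∀ a ∈ unitD, r < s a → F a ≤ c}

/-- The test function `f_a^{(2)}` associated with `α`. -/
def fAlpha (v : ℂ → ℝ) (φ : ℂ → ℂ) (a : ℂ) : ℂ → ℂ :=
  fun z => (sigmaM (φ a) z - φ a) / ((v (φ a) : ℝ) : ℂ)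

/-- The normalized test function `g_a^{(2)}` associated with `α`. -/
def gAlpha (v : ℂ → ℝ) (φ : ℂ → ℂ) (a : ℂ) : ℂ → ℂ :=
  fun z => fAlpha v φ a z / ((BMOAnorm v 2 (fAlpha v φ a) : ℝ) : ℂ)

/-- The test function `f_a^{(1)}` associated with `β`. -/
def fBeta (g : ℂ → ℂ) (φ : ℂ → ℂ) (a : ℂ) : ℂ → ℂ :=
  fun z => hC g (z * (starRingEnd ℂ) (φ a))

/-- The normalized test function `g_a^{(1)}` associated with `β`. -/
def gBeta (v : ℂ → ℝ) (g : ℂ → ℂ) (φ : ℂ → ℂ) (a : ℂ) : ℂ → ℂ :=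
  fun z => (1 + fBeta g φ a z) ^ 2 /
    ((BMOAnorm v 2 (fun w => (1 + fBeta g φ a w) ^ 2) : ℝ) : ℂ)

/-- The radial boundary value of `f` at a point `w` of the unit circle. -/
def bdryVal (f : ℂ → ℂ) (w : ℂ) : ℂ :=
  limUnder (nhdsWithin (1:ℝ) (Iio 1)) (fun r : ℝ => f ((r : ℂ) * w))

/-- The point `e^{it}` of the unit circle. -/
def arcPt (t : ℝ) : ℂ := Complex.exp ((t : ℂ) * Complex.I)

/-- The mean of a function `F` defined on the unit circle over the arc with center `e^{iθ}`
and normalized length `ℓ`. -/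
def arcMeanT (F : ℂ → ℂ) (θ ℓ : ℝ) : ℂ :=
  (∫ t in (θ - Real.pi * ℓ)..(θ + Real.pi * ℓ), F (arcPt t)) / ((2 * Real.pi * ℓ : ℝ) : ℂ)

/-- `η(F, I, p)` for a function `F` on the circle, for the arc `I` with center `e^{iθ}`
and normalized length `ℓ`. -/
def etaT (F : ℂ → ℂ) (θ ℓ : ℝ) (p : ℝ) : ℝ :=
  ((∫ t in (θ - Real.pi * ℓ)..(θ + Real.pi * ℓ), ‖F (arcPt t) - arcMeanT F θ ℓ‖ ^ p) /
    (2 * Real.pi * ℓ)) ^ (1 / p)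

/-- `η(f, I, p)` for `f` analytic on the disk, using radial boundary values. -/
def etaH (f : ℂ → ℂ) (θ ℓ : ℝ) (p : ℝ) : ℝ := etaT (bdryVal f) θ ℓ p

/-- The seminorm `‖f‖_{*,BMO_{v,p}}`. -/
def BMOstarNorm (v : ℂ → ℝ) (p : ℝ) (f : ℂ → ℂ) : ℝ :=
  sSup {r : ℝ | ∃ θ : ℝ, ∃ ℓ ∈ Ioc (0:ℝ) 1, r = v (((1 - ℓ : ℝ)) : ℂ) * etaH f θ ℓ p}

/-- Membership in `BMO_{v,p}`. -/
def memBMO (v : ℂ → ℝ) (p : ℝ) (f : ℂ → ℂ) : Prop :=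
  memHp p f ∧
    BddAbove {r : ℝ | ∃ θ : ℝ, ∃ ℓ ∈ Ioc (0:ℝ) 1, r = v (((1 - ℓ : ℝ)) : ℂ) * etaH f θ ℓ p}

/-- Membership in `VMO_{v,p}`. -/
def memVMO (v : ℂ → ℝ) (p : ℝ) (f : ℂ → ℂ) : Prop :=
  memBMO v p f ∧ ∀ ε > (0:ℝ), ∃ δ > (0:ℝ), ∀ θ ℓ : ℝ, ℓ ∈ Ioc (0:ℝ) 1 → ℓ < δ →
    v (((1 - ℓ : ℝ)) : ℂ) * etaH f θ ℓ p < ε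

end


set_option maxHeartbeats 1000000 in
/-- Lemma: equivalence of two suprema.
For an almost increasing `g : [1,∞) → (0,∞)`,
`sup_{x,y∈(0,1)} [g(1/(1−y))/g(1/(1−x))]·[(1−y²)(1−x²)/(1−xy)²]
  ≍ sup_{t,x∈(0,1]} t g(1/(tx))/g(1/x)`  (formulated via mutual domination of upper
bounds), and if `x ↦ x g(1/x)` is almost increasing on `(0,1]` then both quantities
are finite. -/
theorem stmt18 (g : ℝ → ℝ) (hgpos : ∀ x : ℝ, 1 ≤ x → 0 < g x)
    (hgai : AlmostIncreasingOn g (Ici 1)) :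
    (∃ c₁ > (0:ℝ), ∀ M : ℝ,
      (∀ x ∈ Ioo (0:ℝ) 1, ∀ y ∈ Ioo (0:ℝ) 1,
        g (1/(1-y)) / g (1/(1-x)) * ((1-y^2) * (1-x^2) / (1-x*y)^2) ≤ M) →
      ∀ t ∈ Ioc (0:ℝ) 1, ∀ x ∈ Ioc (0:ℝ) 1, t * g (1/(t*x)) / g (1/x) ≤ c₁ * M) ∧
    (∃ c₂ > (0:ℝ), ∀ M : ℝ,
      (∀ t ∈ Ioc (0:ℝ) 1, ∀ x ∈ Ioc (0:ℝ) 1, t * g (1/(t*x)) / g (1/x) ≤ M) →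
      ∀ x ∈ Ioo (0:ℝ) 1, ∀ y ∈ Ioo (0:ℝ) 1,
        g (1/(1-y)) / g (1/(1-x)) * ((1-y^2) * (1-x^2) / (1-x*y)^2) ≤ c₂ * M) ∧
    (AlmostIncreasingOn (fun x => x * g (1/x)) (Ioc 0 1) →
      ∃ M : ℝ, (∀ t ∈ Ioc (0:ℝ) 1, ∀ x ∈ Ioc (0:ℝ) 1, t * g (1/(t*x)) / g (1/x) ≤ M) ∧
        (∀ x ∈ Ioo (0:ℝ) 1, ∀ y ∈ Ioo (0:ℝ) 1,
          g (1/(1-y)) / g (1/(1-x)) * ((1-y^2) * (1-x^2) / (1-x*y)^2) ≤ M)) := by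
  obtain ⟨C, hC1, hCm⟩ := hgai
  have hC0 : (0:ℝ) < C := lt_of_lt_of_le one_pos hC1
  have hg1 : (0:ℝ) < g 1 := hgpos 1 le_rfl
  have hg2 : (0:ℝ) < g 2 := hgpos 2 (by norm_num)
  have hinv : ∀ x : ℝ, 0 < x → x ≤ 1 → 1 ≤ 1/x := fun x hx hx1 => one_le_one_div hx hx1
  -- Key Lemma: first-sup bound gives second-sup bound for x < 1
  have KL : ∀ M : ℝ,
      (∀ x ∈ Ioo (0:ℝ) 1, ∀ y ∈ Ioo (0:ℝ) 1,
        g (1/(1-y)) / g (1/(1-x)) * ((1-y^2) * (1-x^2) / (1-x*y)^2) ≤ M) →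
      ∀ t ∈ Ioc (0:ℝ) 1, ∀ x : ℝ, 0 < x → x < 1 →
        t * g (1/(t*x)) / g (1/x) ≤ 4 * M := by
    intro M hM t ht x hx hx1
    obtain ⟨ht0, ht1⟩ := ht
    have htx0 : 0 < t * x := mul_pos ht0 hx
    have htx1 : t * x < 1 := by nlinarith
    have hb := hM (1-x) ⟨by linarith, by linarith⟩ (1-t*x) ⟨by linarith, by linarith⟩
    have e1 : (1:ℝ) - (1 - t*x) = t*x := by ring
    have e2 : (1:ℝ) - (1 - x) = x := by ring
    rw [e1, e2] at hb
    have hApos : 0 < g (1/(t*x)) := hgpos _ (hinv _ htx0 htx1.le)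
    have hBpos : 0 < g (1/x) := hgpos _ (hinv _ hx hx1.le)
    have hDb : 0 < 1 - (1-x)*(1-t*x) := by nlinarith
    have hbr : t/4 ≤ (1-(1-t*x)^2) * (1-(1-x)^2) / (1-(1-x)*(1-t*x))^2 := by
      rw [div_le_div_iff₀ (by norm_num) (pow_pos hDb 2)]
      have h2 : 1 + t - t*x ≤ 2 := by nlinarith
      have h2' : (0:ℝ) ≤ 1 + t - t*x := by nlinarith
      have h3 : (1:ℝ) ≤ 2 - t*x := by nlinarith
      have h4 : (1:ℝ) ≤ 2 - x := by nlinarith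
      have hu : (1+t-t*x)^2 ≤ 4*((2-t*x)*(2-x)) := by nlinarith
      have htx2 : (0:ℝ) ≤ t*x^2 := by positivity
      nlinarith [mul_le_mul_of_nonneg_left hu htx2]
    have hAB : 0 ≤ g (1/(t*x)) / g (1/x) := (div_pos hApos hBpos).le
    calc t * g (1/(t*x)) / g (1/x)
        = 4 * (g (1/(t*x)) / g (1/x) * (t/4)) := by ring
      _ ≤ 4 * (g (1/(t*x)) / g (1/x) * ((1-(1-t*x)^2) * (1-(1-x)^2) / (1-(1-x)*(1-t*x))^2)) := by
          have := mul_le_mul_of_nonneg_left hbr hAB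
          linarith
      _ ≤ 4 * M := by linarith
  -- Part 2 first (reused in part 3)
  have P2 : ∀ M : ℝ,
      (∀ t ∈ Ioc (0:ℝ) 1, ∀ x ∈ Ioc (0:ℝ) 1, t * g (1/(t*x)) / g (1/x) ≤ M) →
      ∀ x ∈ Ioo (0:ℝ) 1, ∀ y ∈ Ioo (0:ℝ) 1,
        g (1/(1-y)) / g (1/(1-x)) * ((1-y^2) * (1-x^2) / (1-x*y)^2) ≤ 4*C * M := by
    intro M hM x hx y hy
    obtain ⟨hx0, hx1⟩ := hx
    obtain ⟨hy0, hy1⟩ := hy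
    have hM1 : (1:ℝ) ≤ M := by
      have h11 := hM 1 ⟨one_pos, le_rfl⟩ 1 ⟨one_pos, le_rfl⟩
      rw [show (1:ℝ)*1 = 1 from mul_one 1, one_div_one, one_mul, div_self hg1.ne'] at h11
      exact h11
    have hApos : 0 < g (1/(1-y)) := hgpos _ (hinv _ (by linarith) (by linarith))
    have hBpos : 0 < g (1/(1-x)) := hgpos _ (hinv _ (by linarith) (by linarith))
    have hxy : 0 < 1 - x*y := by nlinarith
    have hBrnn : 0 ≤ (1-y^2) * (1-x^2) / (1-x*y)^2 := by
      apply div_nonneg _ (sq_nonneg _)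
      nlinarith [mul_pos (mul_pos (sub_pos.mpr hy1) (by linarith : (0:ℝ) < 1 + y))
        (mul_pos (sub_pos.mpr hx1) (by linarith : (0:ℝ) < 1 + x))]
    rcases le_or_gt y x with hle | hlt
    · -- y ≤ x
      have hAleCB : g (1/(1-y)) ≤ C * g (1/(1-x)) := by
        apply hCm (1/(1-x)) (hinv _ (by linarith) (by linarith)) (1/(1-y))
          (hinv _ (by linarith) (by linarith))
        apply one_div_le_one_div_of_le (by linarith) (by linarith)
      have hAB : g (1/(1-y)) / g (1/(1-x)) ≤ C := by
        rw [div_le_iff₀ hBpos]; linarith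
      have hBr4 : (1-y^2) * (1-x^2) / (1-x*y)^2 ≤ 4 := by
        rw [div_le_iff₀ (pow_pos hxy 2)]
        nlinarith [sq_nonneg (x - y), sq_nonneg (1 - x*y)]
      calc g (1/(1-y)) / g (1/(1-x)) * ((1-y^2) * (1-x^2) / (1-x*y)^2)
          ≤ C * 4 := mul_le_mul hAB hBr4 hBrnn hC0.le
        _ ≤ 4*C * M := by nlinarith [mul_le_mul_of_nonneg_left hM1 hC0.le]
    · -- x < y
      set tt := (1-y)/(1-x) with htt
      have ht0 : 0 < tt := div_pos (by linarith) (by linarith)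
      have hM2 := hM tt ⟨ht0, by
        rw [htt, div_le_one (by linarith)]; linarith⟩ (1-x) ⟨by linarith, by linarith⟩
      rw [htt, div_mul_cancel₀ _ (by linarith : (1:ℝ) - x ≠ 0), ← htt, mul_div_assoc] at hM2
      have hAB : g (1/(1-y)) / g (1/(1-x)) ≤ M / tt := by
        rw [le_div_iff₀ ht0, mul_comm]; exact hM2
      have hBrt : (1-y^2) * (1-x^2) / (1-x*y)^2 ≤ 4 * tt := by
        rw [htt, mul_div_assoc', div_le_div_iff₀ (pow_pos hxy 2) (by linarith)]
        have f1 : x * y ≤ x := by nlinarith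
        have f2 : (1-x)^2 ≤ (1-x*y)^2 := by nlinarith
        have f3 : 1 - y^2 ≤ 2*(1-y) := by nlinarith
        have f4 : (1-x^2)*(1-x) ≤ 2*(1-x)^2 := by nlinarith
        have g1' : (1-y^2)*((1-x^2)*(1-x)) ≤ (2*(1-y))*(2*(1-x)^2) := by
          apply mul_le_mul f3 f4 (by nlinarith) (by linarith)
        have g2' : (2*(1-y))*(2*(1-x)^2) ≤ (2*(1-y))*(2*(1-x*y)^2) := by
          apply mul_le_mul_of_nonneg_left (by linarith) (by linarith)
        nlinarith [g1', g2']
      have hMt : 0 ≤ M / tt := div_nonneg (by linarith) ht0.le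
      have hfin : M / tt * (4 * tt) = 4 * M := by field_simp
      calc g (1/(1-y)) / g (1/(1-x)) * ((1-y^2) * (1-x^2) / (1-x*y)^2)
          ≤ M / tt * (4 * tt) := mul_le_mul hAB hBrt hBrnn hMt
        _ = 4 * M := hfin
        _ ≤ 4*C * M := by nlinarith [mul_le_mul_of_nonneg_left hM1 hC0.le]
  refine ⟨⟨4*C*(g 2/g 1) + 4, by positivity, ?_⟩, ⟨4*C, by positivity, P2⟩, ?_⟩
  · intro M hM t ht x hx
    have hM1 : (1:ℝ) ≤ M := by
      have h11 := hM (1/2) ⟨by norm_num, by norm_num⟩ (1/2) ⟨by norm_num, by norm_num⟩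
      rw [show (1:ℝ) - 1/2 = 1/2 by norm_num, show (1:ℝ)/(1/2) = 2 by norm_num,
        div_self hg2.ne'] at h11
      norm_num at h11
      linarith
    rcases lt_or_eq_of_le hx.2 with hx1 | hx1
    · have := KL M hM t ht x hx.1 hx1
      have h4 : 4 * M ≤ (4*C*(g 2/g 1) + 4) * M := by
        have : 0 ≤ 4*C*(g 2/g 1) * M := by positivity
        nlinarith
      linarith
    · subst hx1
      obtain ⟨ht0, ht1⟩ := ht
      have hkl := KL M hM t ⟨ht0, ht1⟩ (1/2) (by norm_num) (by norm_num)
      rw [show (1:ℝ)/(t*(1/2)) = 2/t by rw [eq_div_iff ht0.ne']; field_simp,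
        show (1:ℝ)/(1/2:ℝ) = 2 by norm_num] at hkl
      -- hkl : t * g (2/t) / g 2 ≤ 4 * M
      have hgle : g (1/t) ≤ C * g (2/t) := by
        apply hCm (2/t) (by rw [mem_Ici, le_div_iff₀ ht0]; linarith) (1/t)
          (hinv _ ht0 ht1)
        rw [div_le_div_iff₀ ht0 ht0]; nlinarith
      have h1 : t * g (2/t) ≤ 4*M*g 2 := by
        rw [div_le_iff₀ hg2] at hkl; linarith
      have h2 : t * g (1/t) ≤ C * (4*M*g 2) := by
        have a1 := mul_le_mul_of_nonneg_left hgle ht0.le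
        have a2 := mul_le_mul_of_nonneg_left h1 hC0.le
        nlinarith
      rw [mul_one, one_div_one, div_le_iff₀ hg1]
      have e : (4*C*(g 2/g 1) + 4)*M*g 1 = 4*C*M*g 2 + 4*M*g 1 := by
        field_simp
      rw [e]
      nlinarith [mul_pos hg1 (by linarith : (0:ℝ) < M)]
  · intro hai
    obtain ⟨C', hC'1, hC'm⟩ := hai
    have key : ∀ t ∈ Ioc (0:ℝ) 1, ∀ x ∈ Ioc (0:ℝ) 1, t * g (1/(t*x)) / g (1/x) ≤ C' := by
      intro t ht x hx
      have htx : t * x ∈ Ioc (0:ℝ) 1 := ⟨mul_pos ht.1 hx.1, by nlinarith [ht.2, hx.2, ht.1.le]⟩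
      have h := hC'm x hx (t*x) htx (by nlinarith [ht.2, hx.1])
      simp only at h
      -- h : t*x * g (1/(t*x)) ≤ C' * (x * g (1/x))
      have hBpos : 0 < g (1/x) := hgpos _ (hinv _ hx.1 hx.2)
      rw [div_le_iff₀ hBpos, ← mul_le_mul_iff_right₀ hx.1]
      calc x * (t * g (1/(t*x))) = t*x * g (1/(t*x)) := by ring
        _ ≤ C' * (x * g (1/x)) := h
        _ = x * (C' * g (1/x)) := by ring
    refine ⟨4*C*C', ?_, ?_⟩
    · intro t ht x hx
      have := key t ht x hx
      nlinarith [hgpos 1 le_rfl]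
    · exact P2 C' key
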